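/- arXiv:0902.0431 — 2 statements merged into one kernel-verified Lean document; each statement's English description precedes it below -/
import Mathlib

section
/- In the principle of triality, uniqueness holds at the identity: if α₁, α₂ are ℝ-linear maps of the octonions with (α₁x)(α₂y) = xy for all x, y, then α₁ = α₂ = 1 or α₁ = α₂ = −1. -/
/-!
The real octonion (Cayley) algebra `𝕆`, realized via the Cayley–Dickson
construction on the real quaternions: elements are pairs of quaternions with
multiplication `(a,b)(c,d) = (ac − d̄b, da + bc̄)`.
-/

noncomputable section

def Octonion : Type := Quaternion ℝ × Quaternion ℝ

instance : AddCommGroup Octonion :=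
  inferInstanceAs (AddCommGroup (Quaternion ℝ × Quaternion ℝ))

instance : Module ℝ Octonion :=
  inferInstanceAs (Module ℝ (Quaternion ℝ × Quaternion ℝ))

/-- Cayley–Dickson multiplication. -/
instance : Mul Octonion :=
  ⟨fun x y => ((x.1 * y.1 - star y.2 * x.2, y.2 * x.1 + x.2 * star y.1) :
      Quaternion ℝ × Quaternion ℝ)⟩

instance : One Octonion := ⟨((1, 0) : Quaternion ℝ × Quaternion ℝ)⟩

/-- Octonion conjugation `x ↦ x̄`. -/
def oconj (x : Octonion) : Octonion := ((star x.1, -x.2) : Quaternion ℝ × Quaternion ℝ)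

/-- The real part `R(x)` of an octonion (the coefficient of `1`). -/
def ore (x : Octonion) : ℝ := x.1.re

/-- The standard (positive definite) inner product `(x, y)` on the octonions;
it satisfies `(x,y)·1 = ½(x̄y + ȳx)`. -/
def oinner (x y : Octonion) : ℝ := (x.1 * star y.1).re + (x.2 * star y.2).re

/-- The norm `|x| = √(x,x)` of an octonion. -/
def onorm (x : Octonion) : ℝ := Real.sqrt (oinner x x)

namespace TrialityAux


abbrev Q := Quaternion ℝ

def mkO (x y : Q) : Octonion := (x, y)

lemma mkO_mul (a b c d : Q) :
    mkO a b * mkO c d = mkO (a * c - star d * b) (d * a + b * star c) := rfl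

lemma one_def' : (1 : Octonion) = mkO 1 0 := rfl

lemma octo_ext (x : Octonion) : x = mkO x.1 x.2 := rfl

lemma mkO_inj {a b c d : Q} (h : mkO a b = mkO c d) : a = c ∧ b = d :=
  ⟨congrArg Prod.fst h, congrArg Prod.snd h⟩

lemma mkO_add (a b c d : Q) : mkO a b + mkO c d = mkO (a + c) (b + d) := rfl

lemma mkO_smul (r : ℝ) (a b : Q) : r • mkO a b = mkO (r • a) (r • b) := rfl

lemma mul_one' (x : Octonion) : x * 1 = x := by
  rw [octo_ext x, one_def', mkO_mul]; simp

lemma one_mul' (x : Octonion) : (1 : Octonion) * x = x := by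
  rw [octo_ext x, one_def', mkO_mul]; simp

lemma oext (x y : Octonion) (h1 : x.1 = y.1) (h2 : x.2 = y.2) : x = y := by
  rw [octo_ext x, octo_ext y, h1, h2]

lemma fst_mul (x y : Octonion) : (x * y).1 = x.1 * y.1 - star y.2 * x.2 := rfl
lemma snd_mul (x y : Octonion) : (x * y).2 = y.2 * x.1 + x.2 * star y.1 := rfl
lemma fst_add (x y : Octonion) : (x + y).1 = x.1 + y.1 := rfl
lemma snd_add (x y : Octonion) : (x + y).2 = x.2 + y.2 := rfl
lemma fst_smul (r : ℝ) (x : Octonion) : (r • x).1 = r • x.1 := rfl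
lemma snd_smul (r : ℝ) (x : Octonion) : (r • x).2 = r • x.2 := rfl

lemma add_mul' (x y z : Octonion) : (x + y) * z = x * z + y * z := by
  apply oext <;>
    simp only [fst_mul, snd_mul, fst_add, snd_add] <;> noncomm_ring

lemma smul_mul' (r : ℝ) (x z : Octonion) : (r • x) * z = r • (x * z) := by
  apply oext <;>
    simp only [fst_mul, snd_mul, fst_smul, snd_smul] <;>
    simp [smul_sub, smul_add, smul_mul_assoc, mul_smul_comm]

instance : FiniteDimensional ℝ Octonion :=
  inferInstanceAs (FiniteDimensional ℝ (Q × Q))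

def qi : Q := ⟨0, 1, 0, 0⟩
def qj : Q := ⟨0, 0, 1, 0⟩
def qk : Q := ⟨0, 0, 0, 1⟩

lemma qij : qi * qj = qk := by
  ext <;> simp [Quaternion.re_mul, Quaternion.imI_mul, Quaternion.imJ_mul,
    Quaternion.imK_mul] <;> simp [qi, qj, qk]

lemma qji : qj * qi = -qk := by
  ext <;> simp [Quaternion.re_mul, Quaternion.imI_mul, Quaternion.imJ_mul,
    Quaternion.imK_mul] <;> simp [qi, qj, qk]

lemma qk_ne : qk ≠ 0 := by
  intro hh
  have := congrArg QuaternionAlgebra.imK hh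
  simp [qk] at this
  exact one_ne_zero this

lemma star_neg_qj : star (-qj) = qj := by
  ext <;> simp <;> simp [qj]

end TrialityAux

open TrialityAux

/-- Uniqueness in the principle of triality at the identity:
if `α₁, α₂` are orthogonal `ℝ`-linear transformations of the octonions with
`(α₁x)(α₂y) = xy` for all `x, y`, then `α₁ = α₂ = 1` or `α₁ = α₂ = −1`. -/
theorem octonion_triality_uniqueness (α₁ α₂ : Octonion → Octonion)
    (h₁add : ∀ x y, α₁ (x + y) = α₁ x + α₁ y)
    (h₁smul : ∀ (r : ℝ) (x : Octonion), α₁ (r • x) = r • α₁ x)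
    (h₁inner : ∀ x y, oinner (α₁ x) (α₁ y) = oinner x y)
    (h₂add : ∀ x y, α₂ (x + y) = α₂ x + α₂ y)
    (h₂smul : ∀ (r : ℝ) (x : Octonion), α₂ (r • x) = r • α₂ x)
    (h₂inner : ∀ x y, oinner (α₂ x) (α₂ y) = oinner x y)
    (h : ∀ x y, α₁ x * α₂ y = x * y) :
    ((∀ x, α₁ x = x) ∧ (∀ x, α₂ x = x)) ∨
      ((∀ x, α₁ x = -x) ∧ (∀ x, α₂ x = -x)) := by
  set b : Octonion := α₂ 1 with hb
  -- α₁ x * b = x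
  have hxb : ∀ x, α₁ x * b = x := by
    intro x
    have := h x 1
    rwa [mul_one'] at this
  -- linear maps
  let f₁ : Octonion →ₗ[ℝ] Octonion := ⟨⟨α₁, h₁add⟩, h₁smul⟩
  let Rb : Octonion →ₗ[ℝ] Octonion :=
    ⟨⟨fun x => x * b, fun x y => add_mul' x y b⟩, fun r x => smul_mul' r x b⟩
  have h1 : Rb * f₁ = 1 := by
    apply LinearMap.ext
    intro x
    show α₁ x * b = x
    exact hxb x
  have h2 : f₁ * Rb = 1 := mul_eq_one_comm.mp h1
  have key : ∀ u : Octonion, α₁ (u * b) = u := by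
    intro u
    have := DFunLike.congr_fun h2 u
    exact this
  have h3 : ∀ u y : Octonion, u * α₂ y = (u * b) * y := by
    intro u y
    have := h (u * b) y
    rwa [key] at this
  have ha2 : ∀ y, α₂ y = b * y := by
    intro y
    have := h3 1 y
    rwa [one_mul', one_mul'] at this
  have nuc : ∀ u y : Octonion, (u * b) * y = u * (b * y) := by
    intro u y
    rw [← ha2 y]
    exact (h3 u y).symm
  -- component analysis
  set p : Q := b.1 with hp
  set q : Q := b.2 with hq
  have hbmk : b = mkO p q := rfl
  -- commutation facts
  have C1 : ∀ w : Q, w * p = p * w ∧ q * w = w * q := by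
    intro w
    have := nuc (mkO w 0) (mkO 0 1)
    rw [hbmk, mkO_mul, mkO_mul, mkO_mul, mkO_mul] at this
    simp only [mul_zero, zero_mul, star_zero, star_one, sub_zero, add_zero, zero_add,
      one_mul, mul_one, zero_sub] at this
    obtain ⟨e1, e2⟩ := mkO_inj this
    constructor
    · simpa using e2
    · rw [mul_neg] at e1
      exact neg_injective e1
  have C2 : ∀ u v : Q, q * u * star v = q * star v * u := by
    intro u v
    have := nuc (mkO u 0) (mkO v 0)
    rw [hbmk, mkO_mul, mkO_mul, mkO_mul, mkO_mul] at this
    simp only [mul_zero, zero_mul, star_zero, sub_zero, add_zero, zero_add] at this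
    obtain ⟨e1, e2⟩ := mkO_inj this
    exact e2
  -- q = 0
  have hq0 : q = 0 := by
    have := C2 qi (-qj)
    rw [star_neg_qj] at this
    rw [mul_assoc, mul_assoc, qij, qji] at this
    rw [mul_neg] at this
    have hk : q * qk = 0 := by
      have h2 : (2 : ℝ) • (q * qk) = 0 := by
        rw [two_smul]
        nth_rewrite 1 [this]
        simp
      rcases smul_eq_zero.mp h2 with h' | h'
      · norm_num at h'
      · exact h' 
    rcases mul_eq_zero.mp hk with h' | h'
    · exact h'
    · exact absurd h' qk_ne
  -- p is real
  have hpre : p = ((p.re : ℝ) : Q) := by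
    have h1 := (C1 qi).1
    have h2 := (C1 qj).1
    rw [Quaternion.ext_iff] at h1 h2
    simp [Quaternion.re_mul, Quaternion.imI_mul, Quaternion.imJ_mul,
      Quaternion.imK_mul] at h1 h2
    simp [qi, qj] at h1 h2
    ext
    · simp
    · simp only [Quaternion.imI_coe]; linarith
    · simp only [Quaternion.imJ_coe]; linarith
    · simp only [Quaternion.imK_coe]; linarith
  set r : ℝ := p.re with hr
  have hbr : b = mkO ((r : Q)) 0 := by rw [hbmk, hq0, ← hpre]
  have hbl : ∀ y : Octonion, b * y = r • y := by
    intro y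
    rw [hbr, octo_ext y, mkO_mul, mkO_smul]
    simp [Quaternion.coe_mul_eq_smul, Quaternion.mul_coe_eq_smul]
  have hbrr : ∀ y : Octonion, y * b = r • y := by
    intro y
    rw [hbr, octo_ext y, mkO_mul, mkO_smul]
    simp [Quaternion.coe_mul_eq_smul, Quaternion.mul_coe_eq_smul, Quaternion.star_coe]
  have hrr : r * r = 1 := by
    have h5 : oinner b b = oinner 1 1 := by rw [hb]; exact h₂inner 1 1
    rw [hbr] at h5
    simp only [oinner, mkO, one_def', Quaternion.star_coe, ← Quaternion.coe_mul,
      Quaternion.re_coe, star_zero, mul_zero, star_one, mul_one, Quaternion.re_zero,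
      add_zero, Quaternion.re_one] at h5
    exact h5
  have ha2' : ∀ y, α₂ y = r • y := fun y => (ha2 y).trans (hbl y)
  have ha1' : ∀ x, r • α₁ x = x := by
    intro x
    rw [← hbrr (α₁ x)]
    exact hxb x
  rcases mul_self_eq_one_iff.mp hrr with h' | h'
  · left
    constructor
    · intro x
      have := ha1' x
      rwa [h', one_smul] at this
    · intro x
      rw [ha2' x, h', one_smul]
  · right
    constructor
    · intro x
      have hx := ha1' x
      rw [h', neg_one_smul] at hx
      exact neg_eq_iff_eq_neg.mp hx
    · intro x
      rw [ha2' x, h', neg_one_smul]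
end
end

section
/- For an ℝ-linear bijection α of the exceptional Jordan algebra 𝔍, the following are equivalent: (1) α preserves the Jordan product; (2) α preserves det and the inner product; (3) α preserves det and fixes E; (4) α preserves the Freudenthal cross product ×. -/
/-!
The real octonion (Cayley) algebra `𝕆`, realized via the Cayley–Dickson
construction on the real quaternions: elements are pairs of quaternions with
multiplication `(a,b)(c,d) = (ac − d̄b, da + bc̄)`.
-/

noncomputable section

/-!
The exceptional Jordan algebra `𝔍 = J(3, 𝕆)`: `3×3` octonionic Hermitian
matrices, with Jordan product `X∘Y = ½(XY + YX)`, trace, inner product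
`(X,Y) = tr(X∘Y)`, Freudenthal cross product, trilinear form and determinant.
-/

/-- `3×3` matrices over the octonions. -/
abbrev JMat : Type := Matrix (Fin 3) (Fin 3) Octonion

/-- The Hermitian condition `X* = X` (octonionic conjugate transpose);
`𝔍 = {X | JHerm X}`. -/
def JHerm (X : JMat) : Prop := ∀ i j, oconj (X j i) = X i j

/-- The trace `tr(X) = ξ₁ + ξ₂ + ξ₃` (for Hermitian `X` the diagonal entries
are real). -/
def jtr (X : JMat) : ℝ := ore (X 0 0) + ore (X 1 1) + ore (X 2 2)

/-- The Jordan multiplication `X∘Y = ½(XY + YX)`. -/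
def jmul (X Y : JMat) : JMat := (2⁻¹ : ℝ) • (X * Y + Y * X)

/-- The inner product `(X, Y) = tr(X∘Y)`. -/
def jinner (X Y : JMat) : ℝ := jtr (jmul X Y)

/-- The Freudenthal cross product
`X×Y = X∘Y − ½(tr(X)Y + tr(Y)X) + ½(tr(X)tr(Y) − (X,Y))E`. -/
def jcross (X Y : JMat) : JMat :=
  jmul X Y - (2⁻¹ : ℝ) • (jtr X • Y + jtr Y • X)
    + ((2⁻¹ : ℝ) * (jtr X * jtr Y - jinner X Y)) • (1 : JMat)

/-- The trilinear form `(X, Y, Z) = (X, Y×Z)`. -/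
def jtri (X Y Z : JMat) : ℝ := jinner X (jcross Y Z)

/-- The determinant `det X = ⅓(X, X, X)`. -/
def jdet (X : JMat) : ℝ := (3⁻¹ : ℝ) * jtri X X X

-- component lemmas
lemma omul_fst (x y : Octonion) : (x * y).1 = x.1 * y.1 - star y.2 * x.2 := rfl
lemma omul_snd (x y : Octonion) : (x * y).2 = y.2 * x.1 + x.2 * star y.1 := rfl
lemma oadd_fst (x y : Octonion) : (x + y).1 = x.1 + y.1 := rfl
lemma oadd_snd (x y : Octonion) : (x + y).2 = x.2 + y.2 := rfl
lemma osmul_fst (r : ℝ) (x : Octonion) : (r • x).1 = r • x.1 := rfl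
lemma osmul_snd (r : ℝ) (x : Octonion) : (r • x).2 = r • x.2 := rfl
lemma oone_fst : (1 : Octonion).1 = 1 := rfl
lemma oone_snd : (1 : Octonion).2 = 0 := rfl
lemma ozero_fst : (0 : Octonion).1 = 0 := rfl
lemma ozero_snd : (0 : Octonion).2 = 0 := rfl
lemma oneg_fst (x : Octonion) : (-x).1 = -x.1 := rfl
lemma oneg_snd (x : Octonion) : (-x).2 = -x.2 := rfl
lemma osub_fst (x y : Octonion) : (x - y).1 = x.1 - y.1 := rfl
lemma osub_snd (x y : Octonion) : (x - y).2 = x.2 - y.2 := rfl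
lemma oconj_fst (x : Octonion) : (oconj x).1 = star x.1 := rfl
lemma oconj_snd (x : Octonion) : (oconj x).2 = -x.2 := rfl

lemma oct_ext {x y : Octonion} (h1 : x.1 = y.1) (h2 : x.2 = y.2) : x = y := by
  cases x; cases y; simp_all [Prod.ext_iff] <;> rfl

-- ore lemmas
@[simp] lemma ore_add (x y : Octonion) : ore (x + y) = ore x + ore y := rfl
@[simp] lemma ore_smul (r : ℝ) (x : Octonion) : ore (r • x) = r * ore x := rfl
@[simp] lemma ore_zero : ore (0 : Octonion) = 0 := rfl
@[simp] lemma ore_one : ore (1 : Octonion) = 1 := rfl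
@[simp] lemma ore_neg (x : Octonion) : ore (-x) = - ore x := rfl
@[simp] lemma ore_sub (x y : Octonion) : ore (x - y) = ore x - ore y := rfl

lemma ore_mul_comm (x y : Octonion) : ore (x * y) = ore (y * x) := by
  simp [ore, omul_fst]; ring

lemma ore_mul_assoc (x y z : Octonion) : ore ((x * y) * z) = ore (x * (y * z)) := by
  simp [ore, omul_fst, omul_snd]; ring

-- oconj lemmas
lemma oconj_mul (x y : Octonion) : oconj (x * y) = oconj y * oconj x := by
  apply oct_ext <;>
    simp [oconj_fst, oconj_snd, omul_fst, omul_snd, star_mul] <;> abel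

@[simp] lemma oconj_add (x y : Octonion) : oconj (x + y) = oconj x + oconj y := by
  apply oct_ext <;> simp [oconj_fst, oconj_snd, oadd_fst, oadd_snd] <;> abel

@[simp] lemma oconj_smul (r : ℝ) (x : Octonion) : oconj (r • x) = r • oconj x := by
  apply oct_ext <;> simp [oconj_fst, oconj_snd, osmul_fst, osmul_snd]

@[simp] lemma oconj_zero : oconj (0 : Octonion) = 0 := by
  apply oct_ext <;> simp [oconj_fst, oconj_snd, ozero_fst, ozero_snd]
@[simp] lemma oconj_one : oconj (1 : Octonion) = 1 := by
  apply oct_ext <;> simp [oconj_fst, oconj_snd, oone_fst, oone_snd]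
@[simp] lemma oconj_oconj (x : Octonion) : oconj (oconj x) = x := by
  apply oct_ext <;> simp [oconj_fst, oconj_snd]
@[simp] lemma ore_oconj (x : Octonion) : ore (oconj x) = ore x := by
  simp [ore, oconj_fst]

-- algebraic laws
lemma oadd_mul (x y z : Octonion) : (x + y) * z = x * z + y * z := by
  apply oct_ext <;> simp [omul_fst, omul_snd, oadd_fst, oadd_snd, add_mul, mul_add] <;> abel
lemma omul_add (x y z : Octonion) : x * (y + z) = x * y + x * z := by
  apply oct_ext <;> simp [omul_fst, omul_snd, oadd_fst, oadd_snd, add_mul, mul_add] <;> abel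
lemma osmul_mul (r : ℝ) (x y : Octonion) : (r • x) * y = r • (x * y) := by
  apply oct_ext <;> simp [omul_fst, omul_snd, osmul_fst, osmul_snd, smul_sub, smul_add, mul_smul_comm, smul_mul_assoc]
lemma omul_smul (r : ℝ) (x y : Octonion) : x * (r • y) = r • (x * y) := by
  apply oct_ext <;> simp [omul_fst, omul_snd, osmul_fst, osmul_snd, smul_sub, smul_add, mul_smul_comm, smul_mul_assoc]
@[simp] lemma omul_one (x : Octonion) : x * 1 = x := by
  apply oct_ext <;> simp [omul_fst, omul_snd, oone_fst, oone_snd]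
@[simp] lemma oone_mul (x : Octonion) : 1 * x = x := by
  apply oct_ext <;> simp [omul_fst, omul_snd, oone_fst, oone_snd]
@[simp] lemma omul_zero (x : Octonion) : x * 0 = 0 := by
  apply oct_ext <;> simp [omul_fst, omul_snd, ozero_fst, ozero_snd]
@[simp] lemma ozero_mul (x : Octonion) : 0 * x = 0 := by
  apply oct_ext <;> simp [omul_fst, omul_snd, ozero_fst, ozero_snd]
lemma oneg_mul (x y : Octonion) : (-x) * y = -(x * y) := by
  apply oct_ext <;> simp [omul_fst, omul_snd, oneg_fst, oneg_snd] <;> abel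
lemma omul_neg (x y : Octonion) : x * (-y) = -(x * y) := by
  apply oct_ext <;> simp [omul_fst, omul_snd, oneg_fst, oneg_snd] <;> abel
lemma osub_mul (x y z : Octonion) : (x - y) * z = x * z - y * z := by
  simp [sub_eq_add_neg, oadd_mul, oneg_mul]
lemma omul_sub (x y z : Octonion) : x * (y - z) = x * y - x * z := by
  simp [sub_eq_add_neg, omul_add, omul_neg]

-- inner product
def oip (x y : Octonion) : ℝ := ore (x * oconj y)

lemma oip_expand (x : Octonion) : oip x x =
    x.1.re^2 + x.1.imI^2 + x.1.imJ^2 + x.1.imK^2 +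
    (x.2.re^2 + x.2.imI^2 + x.2.imJ^2 + x.2.imK^2) := by
  simp [oip, ore, omul_fst, oconj_fst, oconj_snd]; ring

lemma oip_nonneg (x : Octonion) : 0 ≤ oip x x := by
  rw [oip_expand]; positivity

lemma oip_eq_zero {x : Octonion} (h : oip x x = 0) : x = 0 := by
  rw [oip_expand] at h
  apply oct_ext <;> [rw [ozero_fst]; rw [ozero_snd]] <;> apply QuaternionAlgebra.ext <;>
    simp only [Quaternion.re_zero, Quaternion.imI_zero,
      Quaternion.imJ_zero, Quaternion.imK_zero] <;>
    nlinarith [sq_nonneg x.1.re, sq_nonneg x.1.imI, sq_nonneg x.1.imJ, sq_nonneg x.1.imK,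
      sq_nonneg x.2.re, sq_nonneg x.2.imI, sq_nonneg x.2.imJ, sq_nonneg x.2.imK]

lemma omul_oconj_self (x : Octonion) : x * oconj x = (oip x x) • (1 : Octonion) := by
  apply oct_ext <;>
    · apply QuaternionAlgebra.ext <;>
        simp [oip, ore, omul_fst, omul_snd, oconj_fst, oconj_snd, oone_fst, oone_snd,
          osmul_fst, osmul_snd, Quaternion.re_one, Quaternion.imI_one, Quaternion.imJ_one, Quaternion.imK_one, Quaternion.re_zero, Quaternion.imI_zero, Quaternion.imJ_zero, Quaternion.imK_zero] <;> ring

lemma oconj_mul_self (x : Octonion) : oconj x * x = (oip x x) • (1 : Octonion) := by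
  have := omul_oconj_self (oconj x)
  rw [oconj_oconj] at this
  rw [this]
  congr 1
  simp [oip, ore, omul_fst, oconj_fst, oconj_snd]

lemma oherm_eq (x : Octonion) (h : oconj x = x) : x = (ore x) • 1 := by
  have h1 : star x.1 = x.1 := congrArg Prod.fst h
  have h2 : -x.2 = x.2 := congrArg Prod.snd h
  have h2' : x.2 = 0 := by
    have h3 : (2:ℝ) • x.2 = 0 := by
      rw [two_smul]; nth_rewrite 1 [← h2]; exact neg_add_cancel x.2
    rcases smul_eq_zero.mp h3 with h | h
    · norm_num at h
    · exact h
  have hI : x.1.imI = 0 := by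
    have := congrArg QuaternionAlgebra.imI h1
    simp only [Quaternion.imI_star] at this; linarith
  have hJ : x.1.imJ = 0 := by
    have := congrArg QuaternionAlgebra.imJ h1
    simp only [Quaternion.imJ_star] at this; linarith
  have hK : x.1.imK = 0 := by
    have := congrArg QuaternionAlgebra.imK h1
    simp only [Quaternion.imK_star] at this; linarith
  apply oct_ext
  · rw [osmul_fst, oone_fst]
    apply QuaternionAlgebra.ext <;>
      simp [ore, hI, hJ, hK, Quaternion.re_one, Quaternion.imI_one, Quaternion.imJ_one, Quaternion.imK_one]
  · rw [h2', osmul_snd, oone_snd, smul_zero]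



lemma jmat_mul_apply (A B : JMat) (i j : Fin 3) :
    (A * B) i j = A i 0 * B 0 j + A i 1 * B 1 j + A i 2 * B 2 j := by
  rw [Matrix.mul_apply, Fin.sum_univ_three]

lemma mmul_add (A B C : JMat) : A * (B + C) = A * B + A * C := by
  ext i j
  simp [jmat_mul_apply, Matrix.add_apply, omul_add]; abel

lemma madd_mul (A B C : JMat) : (A + B) * C = A * C + B * C := by
  ext i j
  simp [jmat_mul_apply, Matrix.add_apply, oadd_mul]; abel

lemma msmul_mul (r : ℝ) (A B : JMat) : (r • A) * B = r • (A * B) := by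
  ext i j
  simp [jmat_mul_apply, Matrix.smul_apply, osmul_mul, smul_add]

lemma mmul_smul (r : ℝ) (A B : JMat) : A * (r • B) = r • (A * B) := by
  ext i j
  simp [jmat_mul_apply, Matrix.smul_apply, omul_smul, smul_add]

lemma jmat_one_apply (i j : Fin 3) : (1 : JMat) i j = if i = j then 1 else 0 :=
  Matrix.one_apply

lemma mmul_one (A : JMat) : A * 1 = A := by
  ext i j
  fin_cases i <;> fin_cases j <;>
    simp [jmat_mul_apply, jmat_one_apply]

lemma mone_mul (A : JMat) : 1 * A = A := by
  ext i j
  fin_cases i <;> fin_cases j <;>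
    simp [jmat_mul_apply, jmat_one_apply]

-- jtr lemmas
lemma jtr_add (A B : JMat) : jtr (A + B) = jtr A + jtr B := by
  simp [jtr, Matrix.add_apply]; ring
lemma jtr_smul (r : ℝ) (A : JMat) : jtr (r • A) = r * jtr A := by
  simp [jtr, Matrix.smul_apply]; ring
lemma jtr_sub (A B : JMat) : jtr (A - B) = jtr A - jtr B := by
  simp [jtr, Matrix.sub_apply]; ring
lemma jtr_zero : jtr (0 : JMat) = 0 := by simp [jtr, Matrix.zero_apply]
lemma jtr_one : jtr (1 : JMat) = 3 := by norm_num [jtr, jmat_one_apply]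

-- jmul lemmas
lemma jmul_comm (X Y : JMat) : jmul X Y = jmul Y X := by
  unfold jmul; rw [add_comm]
lemma jmul_add_right (X U V : JMat) : jmul X (U + V) = jmul X U + jmul X V := by
  unfold jmul; rw [mmul_add, madd_mul]; rw [← smul_add]; congr 1; abel
lemma jmul_add_left (U V X : JMat) : jmul (U + V) X = jmul U X + jmul V X := by
  rw [jmul_comm, jmul_add_right, jmul_comm X U, jmul_comm X V]
lemma jmul_smul_right (r : ℝ) (X U : JMat) : jmul X (r • U) = r • jmul X U := by
  unfold jmul; rw [mmul_smul, msmul_mul, ← smul_add, smul_comm]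
lemma jmul_smul_left (r : ℝ) (X U : JMat) : jmul (r • X) U = r • jmul X U := by
  rw [jmul_comm, jmul_smul_right, jmul_comm]
lemma jmul_one_right (X : JMat) : jmul X 1 = X := by
  unfold jmul; rw [mmul_one, mone_mul, ← two_smul ℝ X, smul_smul]; norm_num
lemma jmul_one_left (X : JMat) : jmul 1 X = X := by rw [jmul_comm, jmul_one_right]
lemma jmul_self (X : JMat) : jmul X X = X * X := by
  unfold jmul; rw [← two_smul ℝ (X*X), smul_smul]; norm_num
lemma jmul_neg_right (X U : JMat) : jmul X (-U) = - jmul X U := by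
  have : (-U) = (-1 : ℝ) • U := by rw [neg_one_smul]
  rw [this, jmul_smul_right, neg_one_smul]
lemma jmul_sub_right (X U V : JMat) : jmul X (U - V) = jmul X U - jmul X V := by
  rw [sub_eq_add_neg, jmul_add_right, jmul_neg_right, ← sub_eq_add_neg]

-- jinner basic
lemma jinner_comm (X Y : JMat) : jinner X Y = jinner Y X := by
  unfold jinner; rw [jmul_comm]
lemma jinner_add_right (X U V : JMat) : jinner X (U + V) = jinner X U + jinner X V := by
  unfold jinner; rw [jmul_add_right, jtr_add]
lemma jinner_add_left (U V X : JMat) : jinner (U + V) X = jinner U X + jinner V X := by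
  rw [jinner_comm, jinner_add_right, jinner_comm X U, jinner_comm X V]
lemma jinner_smul_right (r : ℝ) (X U : JMat) : jinner X (r • U) = r * jinner X U := by
  unfold jinner; rw [jmul_smul_right, jtr_smul]
lemma jinner_smul_left (r : ℝ) (X U : JMat) : jinner (r • X) U = r * jinner X U := by
  rw [jinner_comm, jinner_smul_right, jinner_comm]
lemma jinner_sub_right (X U V : JMat) : jinner X (U - V) = jinner X U - jinner X V := by
  unfold jinner; rw [jmul_sub_right, jtr_sub]
lemma jinner_one_right (X : JMat) : jinner X 1 = jtr X := by
  unfold jinner; rw [jmul_one_right]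
lemma jinner_one_left (X : JMat) : jinner 1 X = jtr X := by
  rw [jinner_comm, jinner_one_right]
lemma jinner_zero_right (X : JMat) : jinner X 0 = 0 := by
  have : (0 : JMat) = (0:ℝ) • (0:JMat) := by rw [zero_smul]
  rw [this, jinner_smul_right, zero_mul]

-- trace of matrix products
lemma jtr_mul_comm (A B : JMat) : jtr (A * B) = jtr (B * A) := by
  simp only [jtr, jmat_mul_apply, ore_add]
  rw [ore_mul_comm (A 0 0), ore_mul_comm (A 0 1), ore_mul_comm (A 0 2),
    ore_mul_comm (A 1 0), ore_mul_comm (A 1 1), ore_mul_comm (A 1 2),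
    ore_mul_comm (A 2 0), ore_mul_comm (A 2 1), ore_mul_comm (A 2 2)]
  ring

lemma jtr_mul_assoc (A B C : JMat) : jtr ((A * B) * C) = jtr (A * (B * C)) := by
  simp only [jtr, jmat_mul_apply, ore_add, oadd_mul, omul_add, ore_mul_assoc]
  ring

lemma jinner_assoc (X Y Z : JMat) : jinner (jmul X Y) Z = jinner X (jmul Y Z) := by
  unfold jinner jmul
  rw [msmul_mul, mmul_smul, jtr_smul, jtr_smul]
  rw [jtr_add, jtr_smul, jtr_smul, jtr_add, mmul_smul, msmul_mul, jtr_smul, jtr_smul]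
  rw [madd_mul, mmul_add, mmul_add, madd_mul]
  simp only [jtr_add]
  rw [jtr_mul_comm Z (X*Y), jtr_mul_comm Z (Y*X)]
  rw [jtr_mul_assoc X Y Z]
  rw [jtr_mul_assoc Y X Z, jtr_mul_comm Y (X*Z), jtr_mul_assoc X Z Y]
  rw [jtr_mul_comm (Y*Z) X, jtr_mul_comm (Z*Y) X]

-- jcross / jtri algebra
lemma jcross_comm (X Y : JMat) : jcross X Y = jcross Y X := by
  unfold jcross
  rw [jmul_comm, jinner_comm, add_comm (jtr X • Y), mul_comm (jtr X)]

lemma jinner_jcross (X Y Z : JMat) : jinner X (jcross Y Z) =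
    jinner X (jmul Y Z) - 2⁻¹ * (jtr Y * jinner X Z) - 2⁻¹ * (jtr Z * jinner X Y)
      + 2⁻¹ * (jtr Y * jtr Z - jinner Y Z) * jtr X := by
  unfold jcross
  rw [jinner_add_right, jinner_sub_right, jinner_smul_right, jinner_add_right,
    jinner_smul_right, jinner_smul_right, jinner_smul_right, jinner_one_right]
  ring

lemma jtri_expand (X Y Z : JMat) : jtri X Y Z =
    jinner X (jmul Y Z) - 2⁻¹ * (jtr Y * jinner X Z) - 2⁻¹ * (jtr Z * jinner X Y)
      + 2⁻¹ * (jtr Y * jtr Z - jinner Y Z) * jtr X := jinner_jcross X Y Z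

lemma jtri_comm23 (X Y Z : JMat) : jtri X Y Z = jtri X Z Y := by
  unfold jtri; rw [jcross_comm]

lemma jtri_comm12 (X Y Z : JMat) : jtri X Y Z = jtri Y X Z := by
  rw [jtri_expand, jtri_expand]
  rw [show jinner X (jmul Y Z) = jinner Y (jmul X Z) by
    rw [← jinner_assoc, jmul_comm, jinner_assoc]]
  rw [jinner_comm X Z, jinner_comm X Y, jinner_comm Y Z]
  ring

lemma jtri_comm13 (X Y Z : JMat) : jtri X Y Z = jtri Z Y X := by
  rw [jtri_comm12, jtri_comm23, jtri_comm12]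

lemma jtri_add1 (X X' Y Z : JMat) : jtri (X + X') Y Z = jtri X Y Z + jtri X' Y Z := by
  unfold jtri; rw [jinner_add_left]
lemma jtri_smul1 (r : ℝ) (X Y Z : JMat) : jtri (r • X) Y Z = r * jtri X Y Z := by
  unfold jtri; rw [jinner_smul_left]
lemma jtri_add2 (X Y Y' Z : JMat) : jtri X (Y + Y') Z = jtri X Y Z + jtri X Y' Z := by
  rw [jtri_comm12, jtri_add1, jtri_comm12, jtri_comm12 Y']
lemma jtri_smul2 (r : ℝ) (X Y Z : JMat) : jtri X (r • Y) Z = r * jtri X Y Z := by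
  rw [jtri_comm12, jtri_smul1, jtri_comm12]
lemma jtri_add3 (X Y Z Z' : JMat) : jtri X Y (Z + Z') = jtri X Y Z + jtri X Y Z' := by
  rw [jtri_comm13, jtri_add1, jtri_comm13, jtri_comm13 Z']
lemma jtri_smul3 (r : ℝ) (X Y Z : JMat) : jtri X Y (r • Z) = r * jtri X Y Z := by
  rw [jtri_comm13, jtri_smul1, jtri_comm13]

lemma jcross_one_left (X : JMat) : jcross 1 X = (-(2⁻¹ : ℝ)) • X + (2⁻¹ * jtr X) • 1 := by
  unfold jcross
  rw [jmul_one_left, jtr_one, jinner_one_left]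
  rw [show (3:ℝ) * jtr X - jtr X = 2 * jtr X by ring]
  match_scalars <;> ring

lemma jcross_one_one : jcross (1 : JMat) 1 = 1 := by
  rw [jcross_one_left, jtr_one]
  match_scalars; ring

lemma jtr_jcross (X Y : JMat) : jtr (jcross X Y) = 2⁻¹ * (jtr X * jtr Y - jinner X Y) := by
  have h := jinner_jcross 1 X Y
  rw [← jinner_one_left (jcross X Y), h]
  rw [jinner_comm 1 (jmul X Y), jinner_one_right, jinner_comm 1 X, jinner_one_right,
    jinner_comm 1 Y, jinner_one_right, jtr_one]
  unfold jinner
  ring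

lemma jtri_one3 (X Y : JMat) : jtri X Y 1 = 2⁻¹ * (jtr X * jtr Y) - 2⁻¹ * jinner X Y := by
  unfold jtri
  rw [jcross_comm, jcross_one_left, jinner_add_right, jinner_smul_right, jinner_smul_right,
    jinner_one_right]
  ring

lemma jtri_one23 (X : JMat) : jtri X 1 1 = jtr X := by
  rw [jtri_one3, jinner_one_right, jtr_one]; ring

lemma jmul_from_jcross (X Y : JMat) : jmul X Y =
    jcross X Y + (2⁻¹ : ℝ) • (jtr X • Y + jtr Y • X)
      - ((2⁻¹ : ℝ) * (jtr X * jtr Y - jinner X Y)) • (1 : JMat) := by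
  unfold jcross; abel

lemma jtri_self (X : JMat) : jtri X X X = 3 * jdet X := by
  unfold jdet; ring

-- Hermitian closure
lemma JHerm_one : JHerm (1 : JMat) := by
  intro i j
  fin_cases i <;> fin_cases j <;> simp [jmat_one_apply]

lemma JHerm_zero : JHerm (0 : JMat) := by intro i j; simp [Matrix.zero_apply]

lemma JHerm_add {X Y : JMat} (hX : JHerm X) (hY : JHerm Y) : JHerm (X + Y) := by
  intro i j; simp [Matrix.add_apply, hX i j, hY i j]

lemma JHerm_smul (r : ℝ) {X : JMat} (hX : JHerm X) : JHerm (r • X) := by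
  intro i j; simp [Matrix.smul_apply, hX i j]

lemma JHerm_sub {X Y : JMat} (hX : JHerm X) (hY : JHerm Y) : JHerm (X - Y) := by
  intro i j
  simp only [Matrix.sub_apply, sub_eq_add_neg]
  rw [show -(Y j i) = (-1 : ℝ) • (Y j i) by rw [neg_one_smul]]
  rw [oconj_add, oconj_smul, hX i j, hY i j, neg_one_smul]

lemma oconj_matmul {X Y : JMat} (hX : JHerm X) (hY : JHerm Y) (i j : Fin 3) :
    oconj ((X * Y) j i) = (Y * X) i j := by
  rw [jmat_mul_apply, jmat_mul_apply, oconj_add, oconj_add, oconj_mul, oconj_mul, oconj_mul]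
  rw [hY i 0, hY i 1, hY i 2, hX 0 j, hX 1 j, hX 2 j]

lemma JHerm_jmul {X Y : JMat} (hX : JHerm X) (hY : JHerm Y) : JHerm (jmul X Y) := by
  intro i j
  unfold jmul
  rw [Matrix.smul_apply, Matrix.smul_apply, Matrix.add_apply, Matrix.add_apply,
    oconj_smul, oconj_add, oconj_matmul hX hY, oconj_matmul hY hX, add_comm]

lemma JHerm_jcross {X Y : JMat} (hX : JHerm X) (hY : JHerm Y) : JHerm (jcross X Y) := by
  unfold jcross
  exact JHerm_add (JHerm_sub (JHerm_jmul hX hY)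
    (JHerm_smul _ (JHerm_add (JHerm_smul _ hY) (JHerm_smul _ hX)))) (JHerm_smul _ JHerm_one)

lemma ore_mul_oconj (x : Octonion) : ore (x * oconj x) = oip x x := rfl
lemma ore_oconj_mul (x : Octonion) : ore (oconj x * x) = oip x x := by
  rw [oconj_mul_self]; simp

lemma jinner_self_expand {X : JMat} (hX : JHerm X) : jinner X X =
    oip (X 0 0) (X 0 0) + oip (X 1 1) (X 1 1) + oip (X 2 2) (X 2 2) +
    2 * oip (X 0 1) (X 0 1) + 2 * oip (X 0 2) (X 0 2) + 2 * oip (X 1 2) (X 1 2) := by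
  unfold jinner
  rw [jmul_self]
  simp only [jtr, jmat_mul_apply, ore_add]
  rw [show X 1 0 = oconj (X 0 1) from (hX 1 0).symm,
      show X 2 0 = oconj (X 0 2) from (hX 2 0).symm,
      show X 2 1 = oconj (X 1 2) from (hX 2 1).symm]
  rw [show (X 0 0) * (X 0 0) = X 0 0 * oconj (X 0 0) by rw [hX 0 0],
      show (X 1 1) * (X 1 1) = X 1 1 * oconj (X 1 1) by rw [hX 1 1],
      show (X 2 2) * (X 2 2) = X 2 2 * oconj (X 2 2) by rw [hX 2 2]]
  rw [ore_mul_oconj, ore_mul_oconj, ore_mul_oconj, ore_mul_oconj, ore_mul_oconj, ore_mul_oconj,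
    ore_oconj_mul, ore_oconj_mul, ore_oconj_mul]
  ring

lemma jinner_self_nonneg {X : JMat} (hX : JHerm X) : 0 ≤ jinner X X := by
  rw [jinner_self_expand hX]
  have := fun i j => oip_nonneg (X i j)
  linarith [this 0 0, this 0 1, this 0 2, this 1 1, this 1 2, this 2 2]

lemma jinner_self_eq_zero {X : JMat} (hX : JHerm X) (h : jinner X X = 0) : X = 0 := by
  rw [jinner_self_expand hX] at h
  have hn := fun i j => oip_nonneg (X i j)
  have h00 := hn 0 0; have h01 := hn 0 1; have h02 := hn 0 2
  have h11 := hn 1 1; have h12 := hn 1 2; have h22 := hn 2 2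
  have z00 : oip (X 0 0) (X 0 0) = 0 := by linarith
  have z01 : oip (X 0 1) (X 0 1) = 0 := by linarith
  have z02 : oip (X 0 2) (X 0 2) = 0 := by linarith
  have z11 : oip (X 1 1) (X 1 1) = 0 := by linarith
  have z12 : oip (X 1 2) (X 1 2) = 0 := by linarith
  have z22 : oip (X 2 2) (X 2 2) = 0 := by linarith
  have e00 := oip_eq_zero z00; have e01 := oip_eq_zero z01; have e02 := oip_eq_zero z02
  have e11 := oip_eq_zero z11; have e12 := oip_eq_zero z12; have e22 := oip_eq_zero z22
  have e10 : X 1 0 = 0 := by rw [← hX 1 0, e01, oconj_zero]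
  have e20 : X 2 0 = 0 := by rw [← hX 2 0, e02, oconj_zero]
  have e21 : X 2 1 = 0 := by rw [← hX 2 1, e12, oconj_zero]
  ext i j
  rw [Matrix.zero_apply]
  fin_cases i <;> fin_cases j <;> assumption

lemma jinner_pos {X : JMat} (hX : JHerm X) (hne : X ≠ 0) : 0 < jinner X X := by
  rcases lt_or_eq_of_le (jinner_self_nonneg hX) with h | h
  · exact h
  · exact absurd (jinner_self_eq_zero hX h.symm) hne

-- basis matrices
def Eb (i : Fin 3) : JMat := Matrix.of fun a b => if a = i ∧ b = i then 1 else 0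
def Fm (p q : Fin 3) (x : Octonion) : JMat :=
  Matrix.of fun a b => if a = p ∧ b = q then x else if a = q ∧ b = p then oconj x else 0

lemma Eb_apply (i a b : Fin 3) : Eb i a b = if a = i ∧ b = i then 1 else 0 := rfl
lemma Fm_apply (p q : Fin 3) (x : Octonion) (a b : Fin 3) :
    Fm p q x a b = if a = p ∧ b = q then x else if a = q ∧ b = p then oconj x else 0 := rfl

lemma JHerm_Eb (i : Fin 3) : JHerm (Eb i) := by
  intro a b
  fin_cases i <;> fin_cases a <;> fin_cases b <;> simp [Eb_apply]

lemma JHerm_Fm {p q : Fin 3} (h : p ≠ q) (x : Octonion) : JHerm (Fm p q x) := by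
  intro a b
  by_cases h1 : a = p ∧ b = q
  · obtain ⟨rfl, rfl⟩ := h1
    simp [Fm_apply, h, Ne.symm h]
  · by_cases h2 : a = q ∧ b = p
    · obtain ⟨rfl, rfl⟩ := h2
      simp [Fm_apply, h, Ne.symm h]
    · have h1' : ¬ (b = q ∧ a = p) := fun hh => h1 ⟨hh.2, hh.1⟩
      have h2' : ¬ (b = p ∧ a = q) := fun hh => h2 ⟨hh.2, hh.1⟩
      simp [Fm_apply, h1, h2, h1', h2']

lemma one_decomp : (1 : JMat) = Eb 0 + Eb 1 + Eb 2 := by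
  ext a b
  fin_cases a <;> fin_cases b <;> simp [jmat_one_apply, Matrix.add_apply, Eb_apply]

lemma herm_decomp {X : JMat} (hX : JHerm X) :
    X = ore (X 0 0) • Eb 0 + ore (X 1 1) • Eb 1 + ore (X 2 2) • Eb 2
      + Fm 0 1 (X 0 1) + Fm 0 2 (X 0 2) + Fm 1 2 (X 1 2) := by
  have d0 := oherm_eq (X 0 0) (hX 0 0)
  have d1 := oherm_eq (X 1 1) (hX 1 1)
  have d2 := oherm_eq (X 2 2) (hX 2 2)
  have e10 : X 1 0 = oconj (X 0 1) := (hX 1 0).symm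
  have e20 : X 2 0 = oconj (X 0 2) := (hX 2 0).symm
  have e21 : X 2 1 = oconj (X 1 2) := (hX 2 1).symm
  ext a b
  simp only [Matrix.add_apply, Matrix.smul_apply, Eb_apply, Fm_apply]
  fin_cases a <;> fin_cases b <;> simp <;>
    first
      | exact d0 | exact d1 | exact d2 | exact e10 | exact e20 | exact e21

lemma Fm_add (p q : Fin 3) (x y : Octonion) : Fm p q (x + y) = Fm p q x + Fm p q y := by
  ext a b
  simp only [Matrix.add_apply, Fm_apply]
  split_ifs <;> simp

lemma jtr_Eb (i : Fin 3) : jtr (Eb i) = 1 := by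
  fin_cases i <;> simp [jtr, Eb_apply, ore_one, ore_zero]

lemma jinner_Eb (C : JMat) (i : Fin 3) : jinner C (Eb i) = ore (C i i) := by
  fin_cases i <;>
    · simp only [jinner, jmul, jtr, Matrix.smul_apply, Matrix.add_apply, jmat_mul_apply, Eb_apply]
      norm_num [ore_add, ore_smul, Fin.ext_iff]
      try { show 1/2 * ore (C 2 2) + 1/2 * ore (C 2 2) = ore (C 2 2); ring }
      try ring

lemma jmul_Eb_self (i : Fin 3) : jmul (Eb i) (Eb i) = Eb i := by
  rw [jmul_self]
  ext a b
  fin_cases i <;> fin_cases a <;> fin_cases b <;>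
    simp [jmat_mul_apply, Eb_apply]

lemma jmul_Eb_Eb {i j : Fin 3} (h : i ≠ j) : jmul (Eb i) (Eb j) = 0 := by
  unfold jmul
  have : Eb i * Eb j = 0 ∧ Eb j * Eb i = 0 := by
    constructor <;>
      · ext a b
        fin_cases i <;> fin_cases j <;> first | (exact absurd rfl h) | (
          fin_cases a <;> fin_cases b <;> simp [jmat_mul_apply, Eb_apply])
  rw [this.1, this.2]
  simp

lemma jmul_Eb_Fm {p q : Fin 3} (h : p ≠ q) (x : Octonion) :
    jmul (Eb p) (Fm p q x) = (2⁻¹ : ℝ) • Fm p q x := by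
  unfold jmul
  have h1 : Eb p * Fm p q x = Matrix.of fun a b => if a = p ∧ b = q then x else 0 := by
    ext a b
    fin_cases p <;> fin_cases q <;> first | (exact absurd rfl h) | (
      fin_cases a <;> fin_cases b <;> simp [jmat_mul_apply, Eb_apply, Fm_apply])
  have h2 : Fm p q x * Eb p = Matrix.of fun a b => if a = q ∧ b = p then oconj x else 0 := by
    ext a b
    fin_cases p <;> fin_cases q <;> first | (exact absurd rfl h) | (
      fin_cases a <;> fin_cases b <;> simp [jmat_mul_apply, Eb_apply, Fm_apply])
  rw [h1, h2]
  congr 1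
  ext a b
  simp only [Matrix.add_apply, Matrix.of_apply, Fm_apply]
  split_ifs with u v
  · exact absurd (u.1.symm.trans v.1) h
  · rw [add_zero]
  · rw [zero_add]
  · rw [add_zero]

lemma jmul_Fm_self {p q : Fin 3} (h : p ≠ q) (x : Octonion) :
    jmul (Fm p q x) (Fm p q x) = oip x x • (Eb p + Eb q) := by
  rw [jmul_self]
  ext a b
  fin_cases p <;> fin_cases q <;> first | (exact absurd rfl h) | (
    fin_cases a <;> fin_cases b <;>
      simp [jmat_mul_apply, Eb_apply, Fm_apply, Matrix.add_apply, omul_oconj_self,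
        oconj_mul_self, Matrix.smul_apply])

lemma jtr_Fm {p q : Fin 3} (h : p ≠ q) (x : Octonion) : jtr (Fm p q x) = 0 := by
  fin_cases p <;> fin_cases q <;> first | (exact absurd rfl h) | (
    simp [jtr, Fm_apply])

lemma jinner_Eb_self (i : Fin 3) : jinner (Eb i) (Eb i) = 1 := by
  rw [jinner_Eb]
  fin_cases i <;> simp [Eb_apply]

lemma jinner_Eb_Eb {i j : Fin 3} (h : i ≠ j) : jinner (Eb i) (Eb j) = 0 := by
  rw [jinner_Eb]
  fin_cases i <;> fin_cases j <;> first | (exact absurd rfl h) | (simp [Eb_apply])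

lemma jinner_Fm_self {p q : Fin 3} (h : p ≠ q) (x : Octonion) :
    jinner (Fm p q x) (Fm p q x) = 2 * oip x x := by
  unfold jinner
  rw [jmul_Fm_self h, jtr_smul, jtr_add, jtr_Eb, jtr_Eb]
  ring

lemma jcross_Eb_self (i : Fin 3) : jcross (Eb i) (Eb i) = 0 := by
  unfold jcross
  rw [jmul_Eb_self, jtr_Eb, jinner_Eb_self]
  norm_num
  match_scalars <;> norm_num

lemma jcross_Eb_Eb {i j k : Fin 3} (hij : i ≠ j) (hik : i ≠ k) (hjk : j ≠ k)
    (hsum : (1:JMat) = Eb i + Eb j + Eb k) :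
    jcross (Eb i) (Eb j) = (2⁻¹ : ℝ) • Eb k := by
  unfold jcross
  rw [jmul_Eb_Eb hij, jtr_Eb, jtr_Eb]
  rw [jinner_Eb_Eb hij, hsum]
  match_scalars <;> norm_num

lemma jcross_Fm_self {p q k : Fin 3} (hpq : p ≠ q) (hsum : (1:JMat) = Eb p + Eb q + Eb k)
    (x : Octonion) :
    jcross (Fm p q x) (Fm p q x) = (-(oip x x)) • Eb k := by
  unfold jcross
  rw [jmul_Fm_self hpq, jtr_Fm hpq, jinner_Fm_self hpq, hsum]
  match_scalars <;> norm_num <;> ring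

lemma oip_one : oip (1 : Octonion) 1 = 1 := by
  rw [oip_expand]
  norm_num [oone_fst, oone_snd, Quaternion.re_one, Quaternion.imI_one, Quaternion.imJ_one, Quaternion.imK_one, Quaternion.re_zero, Quaternion.imI_zero, Quaternion.imJ_zero, Quaternion.imK_zero]

def oct_e : Octonion := ((⟨0,1,0,0⟩ : Quaternion ℝ), 0)

lemma oip_e : oip oct_e oct_e = 1 := by
  rw [oip_expand]
  norm_num [oct_e, Quaternion.re_zero, Quaternion.imI_zero, Quaternion.imJ_zero, Quaternion.imK_zero]

lemma oip_one_add_e : oip (1 + oct_e) (1 + oct_e) = 2 := by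
  rw [oip_expand, oadd_fst, oadd_snd, Quaternion.re_add, Quaternion.imI_add, Quaternion.imJ_add,
    Quaternion.imK_add]
  norm_num [oct_e, oadd_fst, oadd_snd, oone_fst, oone_snd, Quaternion.re_one, Quaternion.imI_one, Quaternion.imJ_one, Quaternion.imK_one, Quaternion.re_zero, Quaternion.imI_zero, Quaternion.imJ_zero, Quaternion.imK_zero]

lemma sq_sum_contra {a b : ℝ} (h1 : a^2 = 4) (h2 : b^2 = 4) (h3 : (a+b)^2 = 8) : False := by
  have hab : a * b = 0 := by nlinarith
  nlinarith [hab, h1, h2]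

lemma jmat_one_ne_zero : (1 : JMat) ≠ 0 := by
  intro h
  have h1 := congrFun (congrFun h 0) 0
  rw [jmat_one_apply, Matrix.zero_apply, if_pos rfl] at h1
  have := congrArg ore h1
  rw [ore_one, ore_zero] at this
  norm_num at this

lemma one_decomp_120 : (1 : JMat) = Eb 1 + Eb 2 + Eb 0 := by rw [one_decomp]; abel
lemma one_decomp_021 : (1 : JMat) = Eb 0 + Eb 2 + Eb 1 := by rw [one_decomp]; abel

lemma cube_expand (X Y : JMat) : jtri (X+Y) (X+Y) (X+Y) =
    jtri X X X + 3*jtri X X Y + 3*jtri Y Y X + jtri Y Y Y := by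
  rw [jtri_add1, jtri_add2, jtri_add2, jtri_add3, jtri_add3, jtri_add3, jtri_add3]
  rw [jtri_comm23 X Y X, jtri_comm13 Y X X, jtri_comm23 Y X Y, jtri_comm13 X Y Y]
  ring

lemma cube_sub_expand (X Y : JMat) : jtri (X-Y) (X-Y) (X-Y) =
    jtri X X X - 3*jtri X X Y + 3*jtri Y Y X - jtri Y Y Y := by
  rw [sub_eq_add_neg, show -Y = (-1:ℝ)•Y from (neg_one_smul ℝ Y).symm, cube_expand]
  simp only [jtri_smul1, jtri_smul2, jtri_smul3]
  ring

lemma jtri_XXY (X Y : JMat) : 6 * jtri X X Y =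
    jtri (X+Y) (X+Y) (X+Y) - jtri (X-Y) (X-Y) (X-Y) - 2*jtri Y Y Y := by
  rw [cube_expand, cube_sub_expand]; ring

lemma jtri_polar (X Y Z : JMat) : 2 * jtri X Y Z =
    jtri (X+Z) (X+Z) Y - jtri X X Y - jtri Z Z Y := by
  rw [jtri_add1, jtri_add2, jtri_add2]
  rw [jtri_comm12 Z X Y]
  rw [jtri_comm23 X Z Y]
  ring


/-- For an `ℝ`-linear bijection `α` of the exceptional Jordan
algebra `𝔍`, the following are equivalent:
(1) `α` preserves the Jordan product;
(2) `α` preserves `det` and the inner product;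
(3) `α` preserves `det` and fixes `E = 1`;
(4) `α` preserves the Freudenthal cross product. -/
theorem jordan_aut_characterizations (α : JMat → JMat)
    (hbij : Set.BijOn α {X | JHerm X} {X | JHerm X})
    (hadd : ∀ X Y, JHerm X → JHerm Y → α (X + Y) = α X + α Y)
    (hsmul : ∀ (r : ℝ) (X : JMat), JHerm X → α (r • X) = r • α X) :
    List.TFAE
      [∀ X Y, JHerm X → JHerm Y → α (jmul X Y) = jmul (α X) (α Y),
       (∀ X, JHerm X → jdet (α X) = jdet X) ∧
         (∀ X Y, JHerm X → JHerm Y → jinner (α X) (α Y) = jinner X Y),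
       (∀ X, JHerm X → jdet (α X) = jdet X) ∧ α 1 = 1,
       ∀ X Y, JHerm X → JHerm Y → α (jcross X Y) = jcross (α X) (α Y)] := by
  have hmap : ∀ {X : JMat}, JHerm X → JHerm (α X) := fun hX => hbij.mapsTo hX
  have hinj : ∀ {X Y : JMat}, JHerm X → JHerm Y → α X = α Y → X = Y :=
    fun hX hY h => hbij.injOn hX hY h
  have hsurj : ∀ {Y : JMat}, JHerm Y → ∃ X, JHerm X ∧ α X = Y := by
    intro Y hY
    obtain ⟨X, hX, hXY⟩ := hbij.surjOn hY
    exact ⟨X, hX, hXY⟩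
  have hsub : ∀ X Y, JHerm X → JHerm Y → α (X - Y) = α X - α Y := by
    intro X Y hX hY
    rw [sub_eq_add_neg, show -Y = (-1:ℝ)•Y from (neg_one_smul ℝ Y).symm,
      hadd X _ hX (JHerm_smul _ hY), hsmul _ _ hY, neg_one_smul, ← sub_eq_add_neg]
  have hnondeg : ∀ {D : JMat}, JHerm D → (∀ W, JHerm W → jinner W D = 0) → D = 0 := by
    intro D hD h
    exact jinner_self_eq_zero hD (h D hD)
  -- T-invariance from det-invariance
  have hTinv : (∀ X, JHerm X → jdet (α X) = jdet X) →
      ∀ X Y Z, JHerm X → JHerm Y → JHerm Z →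
        jtri (α X) (α Y) (α Z) = jtri X Y Z := by
    intro hdet
    have hD : ∀ W, JHerm W → jtri (α W) (α W) (α W) = jtri W W W := by
      intro W hW; rw [jtri_self, jtri_self, hdet W hW]
    have hP : ∀ X Y, JHerm X → JHerm Y → jtri (α X) (α X) (α Y) = jtri X X Y := by
      intro X Y hX hY
      have h6 := jtri_XXY (α X) (α Y)
      rw [← hadd X Y hX hY, ← hsub X Y hX hY] at h6
      rw [hD (X+Y) (JHerm_add hX hY), hD (X-Y) (JHerm_sub hX hY), hD Y hY] at h6
      have h7 := jtri_XXY X Y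
      linarith
    intro X Y Z hX hY hZ
    have h2 := jtri_polar (α X) (α Y) (α Z)
    rw [← hadd X Z hX hZ] at h2
    rw [hP (X+Z) Y (JHerm_add hX hZ) hY, hP X Y hX hY, hP Z Y hZ hY] at h2
    have h3 := jtri_polar X Y Z
    linarith
  -- cross-invariance from inner- and T-invariance
  have hcross_of : (∀ X Y, JHerm X → JHerm Y → jinner (α X) (α Y) = jinner X Y) →
      (∀ X Y Z, JHerm X → JHerm Y → JHerm Z → jtri (α X) (α Y) (α Z) = jtri X Y Z) →
      ∀ X Y, JHerm X → JHerm Y → α (jcross X Y) = jcross (α X) (α Y) := by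
    intro hinner hT X Y hX hY
    have hcherm : JHerm (jcross X Y) := JHerm_jcross hX hY
    have hDh : JHerm (jcross (α X) (α Y) - α (jcross X Y)) :=
      JHerm_sub (JHerm_jcross (hmap hX) (hmap hY)) (hmap hcherm)
    have hz : ∀ W, JHerm W → jinner W (jcross (α X) (α Y) - α (jcross X Y)) = 0 := by
      intro W hW
      obtain ⟨Z, hZ, rfl⟩ := hsurj hW
      rw [jinner_sub_right]
      have e1 : jinner (α Z) (jcross (α X) (α Y)) = jtri Z X Y := hT Z X Y hZ hX hY
      have e2 : jinner (α Z) (α (jcross X Y)) = jinner Z (jcross X Y) := hinner _ _ hZ hcherm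
      rw [e1, e2]
      show jtri Z X Y - jtri Z X Y = 0
      ring
    have := hnondeg hDh hz
    have := sub_eq_zero.mp this
    exact this.symm
  tfae_have 1 → 2 := by
    intro hm
    have hE : α 1 = 1 := by
      obtain ⟨X₀, hX₀, hX₀E⟩ := hsurj JHerm_one
      have h := hm X₀ 1 hX₀ JHerm_one
      rw [jmul_one_right, hX₀E, jmul_one_left] at h
      exact h.symm
    have hτassoc : ∀ X Y Z, JHerm X → JHerm Y → JHerm Z →
        jtr (α (jmul (jmul X Y) Z)) = jtr (α (jmul X (jmul Y Z))) := by
      intro X Y Z hX hY hZ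
      rw [hm _ Z (JHerm_jmul hX hY) hZ, hm X Y hX hY,
        hm X _ hX (JHerm_jmul hY hZ), hm Y Z hY hZ]
      exact jinner_assoc (α X) (α Y) (α Z)
    have hτF : ∀ (p q : Fin 3), p ≠ q → ∀ x, jtr (α (Fm p q x)) = 0 := by
      intro p q h x
      have h1 := hτassoc (Eb p) (Eb p) (Fm p q x) (JHerm_Eb p) (JHerm_Eb p) (JHerm_Fm h x)
      rw [jmul_Eb_self, jmul_Eb_Fm h, jmul_smul_right, jmul_Eb_Fm h] at h1
      rw [hsmul _ _ (JHerm_Fm h x), jtr_smul,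
        hsmul _ _ (JHerm_smul _ (JHerm_Fm h x)), jtr_smul,
        hsmul _ _ (JHerm_Fm h x), jtr_smul] at h1
      linarith
    have hτpair : ∀ (p q : Fin 3), p ≠ q →
        jtr (α (Eb p)) = 2⁻¹*(jtr (α (Eb p)) + jtr (α (Eb q))) := by
      intro p q h
      have h2 := hτassoc (Fm p q 1) (Fm p q 1) (Eb p) (JHerm_Fm h 1) (JHerm_Fm h 1) (JHerm_Eb p)
      rw [jmul_Fm_self h, oip_one, one_smul] at h2
      rw [jmul_add_left, jmul_Eb_self, jmul_Eb_Eb (Ne.symm h), add_zero] at h2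
      rw [jmul_comm (Fm p q 1) (Eb p), jmul_Eb_Fm h] at h2
      rw [jmul_smul_right, jmul_Fm_self h, oip_one, one_smul] at h2
      rw [hsmul _ _ (JHerm_add (JHerm_Eb p) (JHerm_Eb q)), jtr_smul,
        hadd _ _ (JHerm_Eb p) (JHerm_Eb q), jtr_add] at h2
      exact h2
    have hsum3 : jtr (α (Eb 0)) + jtr (α (Eb 1)) + jtr (α (Eb 2)) = 3 := by
      have e : jtr (α (Eb 0 + Eb 1 + Eb 2)) = 3 := by
        rw [← one_decomp, hE, jtr_one]
      rw [hadd _ _ (JHerm_add (JHerm_Eb 0) (JHerm_Eb 1)) (JHerm_Eb 2),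
        hadd _ _ (JHerm_Eb 0) (JHerm_Eb 1), jtr_add, jtr_add] at e
      exact e
    have p01 := hτpair 0 1 (by decide)
    have p12 := hτpair 1 2 (by decide)
    have hτE0 : jtr (α (Eb 0)) = 1 := by linarith
    have hτE1 : jtr (α (Eb 1)) = 1 := by linarith
    have hτE2 : jtr (α (Eb 2)) = 1 := by linarith
    have hτ_eq : ∀ Z, JHerm Z → jtr (α Z) = jtr Z := by
      intro Z hZ
      have h1 : JHerm (ore (Z 0 0) • Eb 0) := JHerm_smul _ (JHerm_Eb 0)
      have h2 : JHerm (ore (Z 1 1) • Eb 1) := JHerm_smul _ (JHerm_Eb 1)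
      have h3 : JHerm (ore (Z 2 2) • Eb 2) := JHerm_smul _ (JHerm_Eb 2)
      have h4 : JHerm (Fm 0 1 (Z 0 1)) := JHerm_Fm (by decide) _
      have h5 : JHerm (Fm 0 2 (Z 0 2)) := JHerm_Fm (by decide) _
      have h6 : JHerm (Fm 1 2 (Z 1 2)) := JHerm_Fm (by decide) _
      have s1 := JHerm_add h1 h2
      have s2 := JHerm_add s1 h3
      have s3 := JHerm_add s2 h4
      have s4 := JHerm_add s3 h5
      conv_lhs => rw [herm_decomp hZ]
      rw [hadd _ _ s4 h6, hadd _ _ s3 h5, hadd _ _ s2 h4, hadd _ _ s1 h3, hadd _ _ h1 h2]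
      rw [hsmul _ _ (JHerm_Eb 0), hsmul _ _ (JHerm_Eb 1), hsmul _ _ (JHerm_Eb 2)]
      simp only [jtr_add, jtr_smul]
      rw [hτE0, hτE1, hτE2, hτF 0 1 (by decide) _, hτF 0 2 (by decide) _, hτF 1 2 (by decide) _]
      show _ = ore (Z 0 0) + ore (Z 1 1) + ore (Z 2 2)
      ring
    have hinner : ∀ X Y, JHerm X → JHerm Y → jinner (α X) (α Y) = jinner X Y := by
      intro X Y hX hY
      show jtr (jmul (α X) (α Y)) = jinner X Y
      rw [← hm X Y hX hY]
      exact hτ_eq _ (JHerm_jmul hX hY)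
    refine ⟨?_, hinner⟩
    intro X hX
    show (3⁻¹:ℝ) * jtri (α X) (α X) (α X) = (3⁻¹:ℝ) * jtri X X X
    rw [jtri_expand, jtri_expand]
    rw [show jmul (α X) (α X) = α (jmul X X) from (hm X X hX hX).symm]
    rw [hinner X _ hX (JHerm_jmul hX hX), hτ_eq X hX, hinner X X hX hX]
  tfae_have 2 → 4 := by
    rintro ⟨hdet, hinner⟩
    exact hcross_of hinner (hTinv hdet)
  tfae_have 4 → 3 := by
    intro hc
    obtain ⟨C, hC, hCE⟩ := hsurj JHerm_one
    have hBH : JHerm (α 1) := hmap JHerm_one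
    have hzero0 : α 0 = 0 := by
      have h := hsmul 0 (1:JMat) JHerm_one
      rw [zero_smul, zero_smul] at h
      exact h
    have hBne : α 1 ≠ 0 := by
      intro h
      have : (1:JMat) = 0 := hinj JHerm_one JHerm_zero (by rw [h, hzero0])
      exact jmat_one_ne_zero this
    have hbpos : 0 < jinner (α 1) (α 1) := jinner_pos hBH hBne
    have hne : jinner (α 1) (α 1) ≠ 0 := ne_of_gt hbpos
    have hBB : jcross (α 1) (α 1) = α 1 := by
      have h := hc 1 1 JHerm_one JHerm_one
      rw [jcross_one_one] at h
      exact h.symm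
    have hBcross : ∀ X, JHerm X → jcross (α 1) (α X) =
        (-(2⁻¹:ℝ)) • α X + (2⁻¹ * jtr X) • α 1 := by
      intro X hX
      have h1 := hc 1 X JHerm_one hX
      rw [jcross_one_left] at h1
      rw [← h1]
      rw [hadd _ _ (JHerm_smul _ hX) (JHerm_smul _ JHerm_one), hsmul _ _ hX, hsmul _ _ JHerm_one]
    have hii : ∀ X, JHerm X → 3 * jinner (α 1) (α X) = jinner (α 1) (α 1) * jtr X := by
      intro X hX
      have e1 : jinner (α 1) (jcross (α 1) (α X)) = jinner (α X) (jcross (α 1) (α 1)) := by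
        show jtri (α 1) (α 1) (α X) = jtri (α X) (α 1) (α 1)
        rw [jtri_comm13, jtri_comm23]
      rw [hBB] at e1
      rw [hBcross X hX, jinner_add_right, jinner_smul_right, jinner_smul_right] at e1
      rw [jinner_comm (α X) (α 1)] at e1
      linarith
    have hv : ∀ X Z, JHerm X → JHerm Z →
        3 * jinner (α X) (α Z) = jinner (α 1) (α 1) * jinner X Z := by
      intro X Z hX hZ
      have e1 : jinner (α Z) (jcross (α 1) (α X)) = jinner (α 1) (jcross (α X) (α Z)) := by
        show jtri (α Z) (α 1) (α X) = jtri (α 1) (α X) (α Z)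
        rw [jtri_comm12, jtri_comm23]
      rw [← hc X Z hX hZ] at e1
      have e2 := hii (jcross X Z) (JHerm_jcross hX hZ)
      rw [jtr_jcross] at e2
      have e3 := hii Z hZ
      rw [hBcross X hX, jinner_add_right, jinner_smul_right, jinner_smul_right,
        jinner_comm (α Z) (α 1), jinner_comm (α Z) (α X)] at e1
      linear_combination (-6)*e1 + (-2)*e2 + (jtr X)*e3
    have hτC : ∀ X, JHerm X → 3 * jtr (α X) = jinner (α 1) (α 1) * jinner C X := by
      intro X hX
      have h := hv C X hC hX
      rw [hCE, jinner_one_left] at h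
      exact h
    have hVI : ∀ X Y, JHerm X → JHerm Y →
        6*(jinner (α 1) (α 1))*(jinner C (jcross X Y)) =
          (jinner (α 1) (α 1))^2 * (jinner C X) * (jinner C Y)
            - 3*(jinner (α 1) (α 1))*(jinner X Y) := by
      intro X Y hX hY
      have f1 := hτC (jcross X Y) (JHerm_jcross hX hY)
      have f2 : jtr (α (jcross X Y)) = 2⁻¹*(jtr (α X)*jtr (α Y) - jinner (α X) (α Y)) := by
        rw [hc X Y hX hY, jtr_jcross]
      have f3 := hτC X hX
      have f4 := hτC Y hY
      have f5 := hv X Y hX hY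
      linear_combination (-6)*f1 + 18*f2 + (3*jtr (α Y))*f3
        + ((jinner (α 1) (α 1))*(jinner C X))*f4 + (-3)*f5
    have q : ∀ i : Fin 3, jinner (α 1) (α 1) * (jinner C (Eb i))^2 = 3 := by
      intro i
      have h := hVI (Eb i) (Eb i) (JHerm_Eb i) (JHerm_Eb i)
      rw [jcross_Eb_self i, jinner_zero_right, jinner_Eb_self] at h
      have h2 : jinner (α 1) (α 1) *
          (jinner (α 1) (α 1) * (jinner C (Eb i))^2 - 3) = 0 := by
        linear_combination (-1) * h
      rcases mul_eq_zero.mp h2 with h3 | h3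
      · exact absurd h3 hne
      · linarith
    have hr : 3 * jinner C (Eb 2) =
        jinner (α 1) (α 1) * jinner C (Eb 0) * jinner C (Eb 1) := by
      have h := hVI (Eb 0) (Eb 1) (JHerm_Eb 0) (JHerm_Eb 1)
      rw [jcross_Eb_Eb (by decide) (by decide) (by decide) one_decomp,
        jinner_smul_right, jinner_Eb_Eb (by decide)] at h
      have h2 : jinner (α 1) (α 1) * (3 * jinner C (Eb 2)) =
          jinner (α 1) (α 1) * (jinner (α 1) (α 1) * jinner C (Eb 0) * jinner C (Eb 1)) := by
        linear_combination h
      exact mul_left_cancel₀ hne h2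
    have q0 := q 0
    have q1 := q 1
    have q2 := q 2
    have hc2sq : (jinner C (Eb 2))^2 = 1 := by
      linear_combination ((3*jinner C (Eb 2) + jinner (α 1) (α 1) * jinner C (Eb 0)
          * jinner C (Eb 1))/9) * hr
        + ((jinner (α 1) (α 1) * (jinner C (Eb 1))^2)/9) * q0 + (1/3) * q1
    have hn3 : jinner (α 1) (α 1) = 3 := by
      linear_combination q2 - jinner (α 1) (α 1) * hc2sq
    have hinner : ∀ X Y, JHerm X → JHerm Y → jinner (α X) (α Y) = jinner X Y := by
      intro X Y hX hY
      have h := hv X Y hX hY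
      rw [hn3] at h
      linarith
    have hc0sq : (jinner C (Eb 0))^2 = 1 := by
      rw [hn3] at q0; linarith
    have hc1sq : (jinner C (Eb 1))^2 = 1 := by
      rw [hn3] at q1; linarith
    have hc2 : jinner C (Eb 2) = jinner C (Eb 0) * jinner C (Eb 1) := by
      rw [hn3] at hr; nlinarith [hr]
    have h0 : jinner C (Eb 0) = 1 ∨ jinner C (Eb 0) = -1 := by
      have hh : (jinner C (Eb 0) - 1) * (jinner C (Eb 0) + 1) = 0 := by
        linear_combination hc0sq
      rcases mul_eq_zero.mp hh with h | h
      · left; linarith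
      · right; linarith
    have h1 : jinner C (Eb 1) = 1 ∨ jinner C (Eb 1) = -1 := by
      have hh : (jinner C (Eb 1) - 1) * (jinner C (Eb 1) + 1) = 0 := by
        linear_combination hc1sq
      rcases mul_eq_zero.mp hh with h | h
      · left; linarith
      · right; linarith
    have hFcon : ∀ (p q k : Fin 3), p ≠ q → (1:JMat) = Eb p + Eb q + Eb k →
        jinner C (Eb k) = -1 → False := by
      intro p q k hpq hsumpqk hck
      have key : ∀ x : Octonion, (jinner C (Fm p q x))^2 = 4 * oip x x := by
        intro x
        have h := hVI (Fm p q x) (Fm p q x) (JHerm_Fm hpq x) (JHerm_Fm hpq x)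
        rw [jcross_Fm_self hpq hsumpqk x, jinner_smul_right, jinner_Fm_self hpq,
          hck, hn3] at h
        linear_combination (-1/9) * h
      have k1 := key 1
      rw [oip_one, mul_one] at k1
      have k2 := key oct_e
      rw [oip_e, mul_one] at k2
      have k3 := key (1 + oct_e)
      rw [oip_one_add_e, Fm_add, jinner_add_right] at k3
      norm_num at k3
      exact sq_sum_contra k1 k2 k3
    rcases h0 with h0 | h0 <;> rcases h1 with h1 | h1
    · -- main case: C = 1
      have hc2v : jinner C (Eb 2) = 1 := by rw [hc2, h0, h1]; norm_num
      have hCC : jinner C C = 3 := by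
        have h := hv C C hC hC
        rw [hCE, jinner_one_right, jtr_one, hn3] at h
        linarith
      have htrC : jtr C = 3 := by
        show ore (C 0 0) + ore (C 1 1) + ore (C 2 2) = 3
        rw [← jinner_Eb C 0, ← jinner_Eb C 1, ← jinner_Eb C 2, h0, h1, hc2v]
        norm_num
      have hC1 : C = 1 := by
        have hs : JHerm (C - 1) := JHerm_sub hC JHerm_one
        have hz : jinner (C - 1) (C - 1) = 0 := by
          rw [jinner_sub_right (C-1) C 1, jinner_comm (C-1) C, jinner_sub_right C C 1,
            jinner_comm (C-1) 1, jinner_sub_right 1 C 1, jinner_one_right C,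
            jinner_one_left C, jinner_one_right 1, hCC, htrC]
          rw [jtr_one]
          ring
        exact sub_eq_zero.mp (jinner_self_eq_zero hs hz)
      have hE' : α 1 = 1 := by
        conv_lhs => rw [← hC1]
        exact hCE
      refine ⟨?_, hE'⟩
      intro X hX
      show (3⁻¹:ℝ) * jinner (α X) (jcross (α X) (α X)) = (3⁻¹:ℝ) * jinner X (jcross X X)
      rw [← hc X X hX hX, hinner X (jcross X X) hX (JHerm_jcross hX hX)]
    · have hck : jinner C (Eb 2) = -1 := by rw [hc2, h0, h1]; norm_num
      exact (hFcon 0 1 2 (by decide) one_decomp hck).elim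
    · have hck : jinner C (Eb 2) = -1 := by rw [hc2, h0, h1]; norm_num
      exact (hFcon 0 1 2 (by decide) one_decomp hck).elim
    · exact (hFcon 1 2 0 (by decide) one_decomp_120 h0).elim
  tfae_have 3 → 1 := by
    rintro ⟨hdet, hE⟩
    have hT := hTinv hdet
    have hτ : ∀ X, JHerm X → jtr (α X) = jtr X := by
      intro X hX
      have h := hT X 1 1 hX JHerm_one JHerm_one
      rw [hE, jtri_one23, jtri_one23] at h
      exact h
    have hinner : ∀ X Y, JHerm X → JHerm Y → jinner (α X) (α Y) = jinner X Y := by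
      intro X Y hX hY
      have h := hT X Y 1 hX hY JHerm_one
      rw [hE, jtri_one3, jtri_one3, hτ X hX, hτ Y hY] at h
      linarith
    have hcross := hcross_of hinner hT
    intro X Y hX hY
    rw [jmul_from_jcross X Y, jmul_from_jcross (α X) (α Y)]
    have hin : JHerm (jtr X • Y + jtr Y • X) := JHerm_add (JHerm_smul _ hY) (JHerm_smul _ hX)
    rw [hsub _ _ (JHerm_add (JHerm_jcross hX hY) (JHerm_smul _ hin)) (JHerm_smul _ JHerm_one)]
    rw [hadd _ _ (JHerm_jcross hX hY) (JHerm_smul _ hin)]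
    rw [hsmul _ _ hin, hadd _ _ (JHerm_smul _ hY) (JHerm_smul _ hX), hsmul _ _ hY, hsmul _ _ hX,
      hsmul _ _ JHerm_one, hE, hcross X Y hX hY]
    rw [hτ X hX, hτ Y hY, hinner X Y hX hY]
  tfae_finish
end
end
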